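/- A connected bipartite simple graph G with edge set E has at most |E| convex 2-partitions; that is, the number of unordered partitions of the vertex set of G into two nonempty convex sets is at most the number of edges of G. -/

import Mathlib

open SimpleGraph

/-- A set `C` of vertices of `G` is convex if it contains every vertex lying on a
shortest path between two of its vertices (expressed via distances). -/
def GraphConvex {V : Type*} (G : SimpleGraph V) (C : Set V) : Prop :=
  ∀ u ∈ C, ∀ w ∈ C, ∀ v : V, G.edist u v + G.edist v w = G.edist u w → v ∈ C

section aux

variable {V : Type*} {G : SimpleGraph V}

lemma edist_eq_dist (h : G.Reachable u v) : G.edist u v = (G.dist u v : ℕ∞) :=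
  (ENat.coe_toNat (edist_ne_top_iff_reachable.mpr h)).symm

/-- parity of walks in a 2-colored graph -/
lemma walk_parity (c : G.Coloring (Fin 2)) {x y : V} (p : G.Walk x y) :
    (c x = c y ↔ Even p.length) := by
  induction p with
  | nil => simp
  | @cons a b d hab p ih =>
    have h1 : c a ≠ c b := c.valid hab
    simp only [SimpleGraph.Walk.length_cons, Nat.even_add_one, ← ih]
    revert h1
    generalize c a = pa; generalize c b = pb; generalize c d = pd
    revert pa pb pd; decide

lemma dist_ne_of_adj (hconn : G.Connected) (hbip : G.Colorable 2) {u v : V}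
    (huv : G.Adj u v) (x : V) : G.dist x u ≠ G.dist x v := by
  obtain ⟨c⟩ := hbip
  obtain ⟨p, hp⟩ := (hconn x u).exists_walk_length_eq_dist
  obtain ⟨q, hq⟩ := (hconn x v).exists_walk_length_eq_dist
  intro h
  have h1 := walk_parity c p
  have h2 := walk_parity c q
  rw [hp] at h1; rw [hq] at h2; rw [h] at h1
  have h3 : c u ≠ c v := c.valid huv
  have h4 : (c x = c u) ↔ (c x = c v) := h1.trans h2.symm
  by_cases hx : c x = c u
  · exact h3 (hx.symm.trans (h4.mp hx))
  · have hx2 : c x ≠ c v := fun hh => hx (h4.mpr hh)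
    have htwo : ∀ a b d : Fin 2, a ≠ b → a ≠ d → b = d := by decide
    exact h3 (htwo _ _ _ hx hx2)

lemma cross_exists {A : Set V} (hconn : G.Connected)
    (hA : A.Nonempty) (hB : Aᶜ.Nonempty) :
    ∃ u v, u ∈ A ∧ v ∉ A ∧ G.Adj u v := by
  obtain ⟨a, ha⟩ := hA
  obtain ⟨b, hb⟩ := hB
  obtain ⟨p⟩ := hconn a b
  clear hconn
  induction p with
  | nil => exact absurd ha hb
  | @cons a m b hadj p ih =>
    by_cases hm : m ∈ A
    · exact ih hm hb
    · exact ⟨a, m, ha, hm, hadj⟩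

/-- The cut edge determines the convex partition. -/
lemma mem_iff_dist_lt (hconn : G.Connected) (hbip : G.Colorable 2)
    {A B : Set V} (hCA : GraphConvex G A) (hCB : GraphConvex G B)
    (hD : Disjoint A B) (hU : A ∪ B = Set.univ)
    {u v : V} (hu : u ∈ A) (hv : v ∈ B) (huv : G.Adj u v) (x : V) :
    x ∈ A ↔ G.dist x u < G.dist x v := by
  have key : ∀ (A' B' : Set V), GraphConvex G A' → Disjoint A' B' →
      ∀ u' v', u' ∈ A' → v' ∈ B' → G.Adj u' v' → ∀ x ∈ A', G.dist x u' < G.dist x v' := by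
    intro A' B' hCA' hD' u' v' hu' hv' huv' x hx
    rcases lt_or_ge (G.dist x u') (G.dist x v') with h | h
    · exact h
    have hne := dist_ne_of_adj hconn hbip huv' x
    have hlt : G.dist x v' < G.dist x u' := lt_of_le_of_ne h (Ne.symm hne)
    -- then dist x u' = dist x v' + 1, so v' is between x and u'
    have h1 : G.dist x u' ≤ G.dist x v' + 1 := by
      calc G.dist x u' ≤ G.dist x v' + G.dist v' u' := hconn.dist_triangle
        _ = G.dist x v' + 1 := by rw [dist_eq_one_iff_adj.mpr huv'.symm]
    have h2 : G.dist x u' = G.dist x v' + 1 := le_antisymm h1 hlt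
    have hE : G.edist x v' + G.edist v' u' = G.edist x u' := by
      rw [edist_eq_dist (hconn x v'), edist_eq_dist (hconn v' u'), edist_eq_dist (hconn x u'),
        dist_eq_one_iff_adj.mpr huv'.symm, h2]
      push_cast
      ring
    have : v' ∈ A' := hCA' x hx u' hu' v' hE
    exact absurd hv' (Set.disjoint_left.mp hD' this)
  constructor
  · intro hx; exact key A B hCA hD u v hu hv huv x hx
  · intro h
    by_contra hx
    have hxB : x ∈ B := by
      have := hU ▸ Set.mem_univ x
      rcases (Set.mem_union ..).mp (hU ▸ Set.mem_univ x) with h' | h'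
      · exact absurd h' hx
      · exact h'
    have := key B A hCB hD.symm v u hv hu huv.symm x hxB
    omega

end aux

/-- A connected bipartite graph has at most `|E|` (unordered) convex 2-partitions. -/
theorem stmt_4 {V : Type*} [Fintype V] (G : SimpleGraph V)
    (hconn : G.Connected) (hbip : G.Colorable 2) :
    Nat.card {P : Set (Set V) // ∃ A B : Set V, A ≠ B ∧ P = {A, B} ∧
      A.Nonempty ∧ B.Nonempty ∧ Disjoint A B ∧ A ∪ B = (Set.univ : Set V) ∧
      GraphConvex G A ∧ GraphConvex G B} ≤ G.edgeSet.ncard := by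
  classical
  set S := {P : Set (Set V) // ∃ A B : Set V, A ≠ B ∧ P = {A, B} ∧
      A.Nonempty ∧ B.Nonempty ∧ Disjoint A B ∧ A ∪ B = (Set.univ : Set V) ∧
      GraphConvex G A ∧ GraphConvex G B} with hS
  -- for each P in S, choose a crossing edge
  have hedge : ∀ P : S, ∃ u v : V, G.Adj u v ∧
      ∃ A B : Set V, P.1 = {A, B} ∧ u ∈ A ∧ v ∈ B ∧ Disjoint A B ∧
        A ∪ B = Set.univ ∧ GraphConvex G A ∧ GraphConvex G B := by
    rintro ⟨P, A, B, hne, hP, hA, hB, hD, hU, hCA, hCB⟩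
    have hBc : B = Aᶜ := by
      ext x
      constructor
      · intro hx; exact fun hxA => Set.disjoint_left.mp hD hxA hx
      · intro hx
        rcases (Set.mem_union ..).mp (hU ▸ Set.mem_univ x) with h | h
        · exact absurd h hx
        · exact h
    obtain ⟨u, v, hu, hv, huv⟩ := cross_exists hconn hA (hBc ▸ hB)
    exact ⟨u, v, huv, A, B, hP, hu, hBc ▸ hv, hD, hU, hCA, hCB⟩
  have hfin : G.edgeSet.Finite := Set.toFinite _
  choose f g hadj A B hP hu hv hD hU hCA hCB using hedge
  have hinj : Function.Injective (fun P : S => (⟨s(f P, g P), (hadj P)⟩ : G.edgeSet)) := by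
    intro P Q hPQ
    simp only [Subtype.mk.injEq, Sym2.eq, Sym2.rel_iff', Prod.mk.injEq, Prod.swap_prod_mk]
      at hPQ
    have key : ∀ R : S, A R = {x | G.dist x (f R) < G.dist x (g R)} ∧ B R = (A R)ᶜ := by
      intro R
      constructor
      · ext x
        exact mem_iff_dist_lt hconn hbip (hCA R) (hCB R) (hD R) (hU R) (hu R) (hv R) (hadj R) x
      · ext x
        constructor
        · intro hx; exact fun hxA => Set.disjoint_left.mp (hD R) hxA hx
        · intro hx
          rcases (Set.mem_union ..).mp (hU R ▸ Set.mem_univ x) with h | h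
          · exact absurd h hx
          · exact h
    obtain ⟨hAP, hBP⟩ := key P
    obtain ⟨hAQ, hBQ⟩ := key Q
    have : P.1 = Q.1 := by
      rw [hP P, hP Q, hBP, hBQ]
      rcases Sym2.eq_iff.mp (Subtype.mk.inj hPQ) with ⟨h1, h2⟩ | ⟨h1, h2⟩
      · rw [hAP, hAQ, h1, h2]
      · have hAPB : A P = (A Q)ᶜ := by
          have hB : B Q = {x | G.dist x (g Q) < G.dist x (f Q)} := by
            ext x
            exact mem_iff_dist_lt hconn hbip (hCB Q) (hCA Q) (hD Q).symm
              (Set.union_comm (A Q) (B Q) ▸ hU Q) (hv Q) (hu Q) (hadj Q).symm x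
          rw [hAP, h1, h2, ← hB, hBQ]
        rw [hAPB, compl_compl]
        exact Set.pair_comm _ _
    exact Subtype.ext this
  calc Nat.card S ≤ Nat.card G.edgeSet := Nat.card_le_card_of_injective _ hinj
    _ = G.edgeSet.ncard := (Nat.card_coe_set_eq _)
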